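/- The total number of partial isometries of the chain {1,...,n} (including the empty map) equals 3·2^{n+1} − (n + 2)^2 − 1. -/

import Mathlib

open Finset

/-- `G` is the graph of a partial isometry of the chain `{1,...,n}`:
a functional, injective relation contained in `{1,...,n} × {1,...,n}`
that preserves distances. -/
def IsPartialIsometryGraph (n : ℕ) (G : Finset (ℕ × ℕ)) : Prop :=
  G ⊆ Finset.Icc 1 n ×ˢ Finset.Icc 1 n ∧
  (∀ p ∈ G, ∀ q ∈ G, p.1 = q.1 → p = q) ∧
  (∀ p ∈ G, ∀ q ∈ G, p.2 = q.2 → p = q) ∧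
  (∀ p ∈ G, ∀ q ∈ G, ((p.1 : ℤ) - q.1).natAbs = ((p.2 : ℤ) - q.2).natAbs)

/-- The graph `G` is order-preserving. -/
def IsOrderPreservingGraph (G : Finset (ℕ × ℕ)) : Prop :=
  ∀ p ∈ G, ∀ q ∈ G, p.1 ≤ q.1 → p.2 ≤ q.2

namespace PIGaux


def pg (k : ℕ) (D : Finset ℕ) : Finset (ℕ × ℕ) := D.image fun x => (x, x + k)
def qg (k : ℕ) (D : Finset ℕ) : Finset (ℕ × ℕ) := D.image fun x => (x + k, x)
def rg (s : ℕ) (D : Finset ℕ) : Finset (ℕ × ℕ) := D.image fun x => (x, s - x)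

def famP (n : ℕ) : Finset (Finset (ℕ × ℕ)) :=
  (range n).biUnion fun k => (((Icc 1 (n - k)).powerset).erase ∅).image (pg k)
def famQ (n : ℕ) : Finset (Finset (ℕ × ℕ)) :=
  (Icc 1 (n - 1)).biUnion fun k => (((Icc 1 (n - k)).powerset).erase ∅).image (qg k)
def famR (n : ℕ) : Finset (Finset (ℕ × ℕ)) :=
  (Icc 2 (2 * n)).biUnion fun s =>
    (((Icc (max 1 (s - n)) (min n (s - 1))).powerset).filter fun D => 2 ≤ D.card).image (rg s)

def F (n : ℕ) : Finset (Finset (ℕ × ℕ)) := insert ∅ (famP n ∪ famQ n ∪ famR n)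

lemma mem_famP {n : ℕ} {G : Finset (ℕ × ℕ)} :
    G ∈ famP n ↔ ∃ k < n, ∃ D, (D ⊆ Icc 1 (n - k) ∧ D ≠ ∅) ∧ pg k D = G := by
  simp [famP, Finset.mem_biUnion, Finset.mem_image, Finset.mem_erase, Finset.mem_powerset]
  tauto

lemma mem_famQ {n : ℕ} {G : Finset (ℕ × ℕ)} :
    G ∈ famQ n ↔ ∃ k, (1 ≤ k ∧ k ≤ n - 1) ∧ ∃ D, (D ⊆ Icc 1 (n - k) ∧ D ≠ ∅) ∧ qg k D = G := by
  simp [famQ, Finset.mem_biUnion, Finset.mem_image, Finset.mem_erase, Finset.mem_powerset,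
    Finset.mem_Icc]
  tauto

lemma mem_famR {n : ℕ} {G : Finset (ℕ × ℕ)} :
    G ∈ famR n ↔ ∃ s, (2 ≤ s ∧ s ≤ 2 * n) ∧
      ∃ D, (D ⊆ Icc (max 1 (s - n)) (min n (s - 1)) ∧ 2 ≤ D.card) ∧ rg s D = G := by
  simp [famR, Finset.mem_biUnion, Finset.mem_image, Finset.mem_filter, Finset.mem_powerset,
    Finset.mem_Icc]


lemma pg_isPIG {n k : ℕ} {D : Finset ℕ} (hD : D ⊆ Icc 1 (n - k)) (hk : k < n) :
    IsPartialIsometryGraph n (pg k D) := by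
  refine ⟨?_, ?_, ?_, ?_⟩
  · intro p hp
    simp only [pg, Finset.mem_image] at hp
    obtain ⟨x, hx, rfl⟩ := hp
    have := hD hx
    simp only [Finset.mem_Icc] at this
    simp only [Finset.mem_product, Finset.mem_Icc]
    omega
  all_goals
    intro p hp q hq
    simp only [pg, Finset.mem_image] at hp hq
    obtain ⟨x, hx, rfl⟩ := hp
    obtain ⟨y, hy, rfl⟩ := hq
    simp only [Prod.mk.injEq]
    try push_cast
    omega

lemma qg_isPIG {n k : ℕ} {D : Finset ℕ} (hD : D ⊆ Icc 1 (n - k)) (hk : k ≤ n) :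
    IsPartialIsometryGraph n (qg k D) := by
  refine ⟨?_, ?_, ?_, ?_⟩
  · intro p hp
    simp only [qg, Finset.mem_image] at hp
    obtain ⟨x, hx, rfl⟩ := hp
    have := hD hx
    simp only [Finset.mem_Icc] at this
    simp only [Finset.mem_product, Finset.mem_Icc]
    omega
  all_goals
    intro p hp q hq
    simp only [qg, Finset.mem_image] at hp hq
    obtain ⟨x, hx, rfl⟩ := hp
    obtain ⟨y, hy, rfl⟩ := hq
    simp only [Prod.mk.injEq]
    try push_cast
    omega

lemma rg_isPIG {n s : ℕ} {D : Finset ℕ} (hD : D ⊆ Icc (max 1 (s - n)) (min n (s - 1)))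
    (hs : 2 ≤ s) : IsPartialIsometryGraph n (rg s D) := by
  refine ⟨?_, ?_, ?_, ?_⟩
  · intro p hp
    simp only [rg, Finset.mem_image] at hp
    obtain ⟨x, hx, rfl⟩ := hp
    have := hD hx
    simp only [Finset.mem_Icc] at this
    simp only [Finset.mem_product, Finset.mem_Icc]
    omega
  all_goals
    intro p hp q hq
    simp only [rg, Finset.mem_image] at hp hq
    obtain ⟨x, hx, rfl⟩ := hp
    obtain ⟨y, hy, rfl⟩ := hq
    have h1 := hD hx
    have h2 := hD hy
    simp only [Finset.mem_Icc] at h1 h2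
    simp only [Prod.mk.injEq]
    omega


lemma bounds {n : ℕ} {G : Finset (ℕ × ℕ)} (h : G ⊆ Finset.Icc 1 n ×ˢ Finset.Icc 1 n)
    {p : ℕ × ℕ} (hp : p ∈ G) : 1 ≤ p.1 ∧ p.1 ≤ n ∧ 1 ≤ p.2 ∧ p.2 ≤ n := by
  have := h hp
  simp only [Finset.mem_product, Finset.mem_Icc] at this
  omega

lemma classify {n : ℕ} {G : Finset (ℕ × ℕ)} (hG : IsPartialIsometryGraph n G)
    (hne : G.Nonempty) :
    (∃ k < n, ∃ D, (D ⊆ Icc 1 (n - k) ∧ D ≠ ∅) ∧ pg k D = G) ∨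
    (∃ k, (1 ≤ k ∧ k ≤ n - 1) ∧ ∃ D, (D ⊆ Icc 1 (n - k) ∧ D ≠ ∅) ∧ qg k D = G) ∨
    (∃ s, (2 ≤ s ∧ s ≤ 2 * n) ∧
      ∃ D, (D ⊆ Icc (max 1 (s - n)) (min n (s - 1)) ∧ 2 ≤ D.card) ∧ rg s D = G) := by
  obtain ⟨hsub, hfun, hinj, hdist⟩ := hG
  obtain ⟨p, hp⟩ := hne
  have hpb := bounds hsub hp
  by_cases hpres : ∀ q ∈ G, (q.2 : ℤ) - q.1 = (p.2 : ℤ) - p.1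
  · -- order preserving (constant difference)
    rcases le_or_gt p.1 p.2 with hle | hlt
    · -- nonnegative shift k = p.2 - p.1 : pg
      left
      refine ⟨p.2 - p.1, by omega, G.image Prod.fst, ⟨?_, ?_⟩, ?_⟩
      · intro x hx
        simp only [Finset.mem_image] at hx
        obtain ⟨q, hq, rfl⟩ := hx
        have hqb := bounds hsub hq
        have := hpres q hq
        simp only [Finset.mem_Icc]
        omega
      · simp only [ne_eq, Finset.image_eq_empty]
        exact Finset.ne_empty_of_mem hp
      · apply Finset.Subset.antisymm
        · intro r hr
          simp only [pg, Finset.mem_image] at hr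
          obtain ⟨x, hx, rfl⟩ := hr
          obtain ⟨q, hq, rfl⟩ := hx
          have h1 := hpres q hq
          have hqb := bounds hsub hq
          have : q = (q.1, q.1 + (p.2 - p.1)) := by
            refine Prod.ext rfl ?_
            omega
          rwa [← this]
        · intro q hq
          have h1 := hpres q hq
          have hqb := bounds hsub hq
          simp only [pg, Finset.mem_image]
          refine ⟨q.1, ⟨q, hq, rfl⟩, ?_⟩
          refine Prod.ext rfl ?_
          simp only
          omega
    · -- negative shift k = p.1 - p.2 : qg
      right; left
      refine ⟨p.1 - p.2, by omega, G.image Prod.snd, ⟨?_, ?_⟩, ?_⟩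
      · intro x hx
        simp only [Finset.mem_image] at hx
        obtain ⟨q, hq, rfl⟩ := hx
        have hqb := bounds hsub hq
        have := hpres q hq
        simp only [Finset.mem_Icc]
        omega
      · simp only [ne_eq, Finset.image_eq_empty]
        exact Finset.ne_empty_of_mem hp
      · apply Finset.Subset.antisymm
        · intro r hr
          simp only [qg, Finset.mem_image] at hr
          obtain ⟨x, hx, rfl⟩ := hr
          obtain ⟨q, hq, rfl⟩ := hx
          have h1 := hpres q hq
          have hqb := bounds hsub hq
          have : q = (q.2 + (p.1 - p.2), q.2) := by
            refine Prod.ext ?_ rfl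
            omega
          rwa [← this]
        · intro q hq
          have h1 := hpres q hq
          have hqb := bounds hsub hq
          simp only [qg, Finset.mem_image]
          refine ⟨q.2, ⟨q, hq, rfl⟩, ?_⟩
          refine Prod.ext ?_ rfl
          simp only
          omega
  · -- order reversing (constant sum)
    push_neg at hpres
    obtain ⟨c, hc, hcd⟩ := hpres
    have hcb := bounds hsub hc
    have hkey := hdist c hc p hp
    have hc1p1 : c.1 ≠ p.1 := by
      intro h
      have := hfun c hc p hp h
      rw [this] at hcd
      exact hcd rfl
    have hsum_cp : (c.1 : ℤ) + c.2 = (p.1 : ℤ) + p.2 := by omega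
    right; right
    have hsum : ∀ q ∈ G, q.1 + q.2 = p.1 + p.2 := by
      intro q hq
      have h1 := hdist q hq p hp
      have h2 := hdist q hq c hc
      omega
    refine ⟨p.1 + p.2, by omega, G.image Prod.fst, ⟨?_, ?_⟩, ?_⟩
    · intro x hx
      simp only [Finset.mem_image] at hx
      obtain ⟨q, hq, rfl⟩ := hx
      have hqb := bounds hsub hq
      have := hsum q hq
      simp only [Finset.mem_Icc]
      omega
    · exact Finset.one_lt_card.mpr ⟨c.1, Finset.mem_image_of_mem _ hc, p.1, Finset.mem_image_of_mem _ hp, hc1p1⟩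
    · apply Finset.Subset.antisymm
      · intro r hr
        simp only [rg, Finset.mem_image] at hr
        obtain ⟨x, hx, rfl⟩ := hr
        obtain ⟨q, hq, rfl⟩ := hx
        have h1 := hsum q hq
        have hqb := bounds hsub hq
        have : q = (q.1, p.1 + p.2 - q.1) := by
          refine Prod.ext rfl ?_
          omega
        rwa [← this]
      · intro q hq
        have h1 := hsum q hq
        have hqb := bounds hsub hq
        simp only [rg, Finset.mem_image]
        refine ⟨q.1, ⟨q, hq, rfl⟩, ?_⟩
        refine Prod.ext rfl ?_
        simp only
        omega

lemma pg_fst (k : ℕ) (D : Finset ℕ) : (pg k D).image Prod.fst = D := by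
  ext x; simp [pg, Finset.mem_image]
lemma qg_snd (k : ℕ) (D : Finset ℕ) : (qg k D).image Prod.snd = D := by
  ext x; simp [qg, Finset.mem_image]
lemma rg_fst (s : ℕ) (D : Finset ℕ) : (rg s D).image Prod.fst = D := by
  ext x; simp [rg, Finset.mem_image]

lemma pg_inj (k : ℕ) : Function.Injective (pg k) := fun D E h => by
  have := congrArg (fun S => S.image Prod.fst) h
  simpa [pg_fst] using this
lemma qg_inj (k : ℕ) : Function.Injective (qg k) := fun D E h => by
  have := congrArg (fun S => S.image Prod.snd) h
  simpa [qg_snd] using this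
lemma rg_inj (s : ℕ) : Function.Injective (rg s) := fun D E h => by
  have := congrArg (fun S => S.image Prod.fst) h
  simpa [rg_fst] using this

lemma card_filter_two_le (s : Finset ℕ) :
    ((s.powerset).filter fun t => 2 ≤ t.card).card = 2 ^ s.card - s.card - 1 := by
  have htot := Finset.card_filter_add_card_filter_not
    (s := s.powerset) (p := fun t => 2 ≤ t.card)
  have hneg : (s.powerset.filter fun t => ¬ 2 ≤ t.card) =
      s.powersetCard 0 ∪ s.powersetCard 1 := by
    ext t
    simp only [Finset.mem_filter, Finset.mem_powerset, Finset.mem_union,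
      Finset.mem_powersetCard]
    by_cases hts : t ⊆ s
    · simp only [hts, true_and]
      omega
    · simp [hts]
  have hdisj : Disjoint (s.powersetCard 0) (s.powersetCard 1) := by
    rw [Finset.disjoint_left]
    intro t ht ht'
    simp only [Finset.mem_powersetCard] at ht ht'
    omega
  have h0 : (s.powersetCard 0).card = 1 := by
    rw [Finset.card_powersetCard]; simp
  have h1 : (s.powersetCard 1).card = s.card := by
    rw [Finset.card_powersetCard]; simp
  rw [hneg, Finset.card_union_of_disjoint hdisj, h0, h1, Finset.card_powerset] at htot
  omega

lemma card_famP (n : ℕ) : (famP n).card = ∑ k ∈ range n, (2 ^ (n - k) - 1) := by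
  rw [famP, Finset.card_biUnion]
  · refine Finset.sum_congr rfl fun k _ => ?_
    rw [Finset.card_image_of_injective _ (pg_inj k),
      Finset.card_erase_of_mem (Finset.empty_mem_powerset _), Finset.card_powerset,
      Nat.card_Icc]
    simp
  · intro k _ k' _ hne
    rw [Function.onFun, Finset.disjoint_left]
    intro G hG hG'
    simp only [Finset.mem_image, Finset.mem_erase, Finset.mem_powerset] at hG hG'
    obtain ⟨D, ⟨hDne, _⟩, rfl⟩ := hG
    obtain ⟨E, ⟨hEne, _⟩, hE⟩ := hG'
    obtain ⟨x, hx⟩ := Finset.nonempty_iff_ne_empty.mpr hDne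
    have hxm : (x, x + k) ∈ pg k D := Finset.mem_image_of_mem _ hx
    rw [← hE] at hxm
    simp only [pg, Finset.mem_image, Prod.mk.injEq] at hxm
    obtain ⟨y, _, hy1, hy2⟩ := hxm
    omega

lemma card_famQ (n : ℕ) : (famQ n).card = ∑ k ∈ Icc 1 (n - 1), (2 ^ (n - k) - 1) := by
  rw [famQ, Finset.card_biUnion]
  · refine Finset.sum_congr rfl fun k _ => ?_
    rw [Finset.card_image_of_injective _ (qg_inj k),
      Finset.card_erase_of_mem (Finset.empty_mem_powerset _), Finset.card_powerset,
      Nat.card_Icc]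
    simp
  · intro k _ k' _ hne
    rw [Function.onFun, Finset.disjoint_left]
    intro G hG hG'
    simp only [Finset.mem_image, Finset.mem_erase, Finset.mem_powerset] at hG hG'
    obtain ⟨D, ⟨hDne, _⟩, rfl⟩ := hG
    obtain ⟨E, ⟨hEne, _⟩, hE⟩ := hG'
    obtain ⟨x, hx⟩ := Finset.nonempty_iff_ne_empty.mpr hDne
    have hxm : (x + k, x) ∈ qg k D := Finset.mem_image_of_mem _ hx
    rw [← hE] at hxm
    simp only [qg, Finset.mem_image, Prod.mk.injEq] at hxm
    obtain ⟨y, _, hy1, hy2⟩ := hxm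
    omega

lemma card_famR (n : ℕ) : (famR n).card =
    ∑ s ∈ Icc 2 (2 * n), (2 ^ (min n (s - 1) + 1 - max 1 (s - n))
      - (min n (s - 1) + 1 - max 1 (s - n)) - 1) := by
  rw [famR, Finset.card_biUnion]
  · refine Finset.sum_congr rfl fun s _ => ?_
    rw [Finset.card_image_of_injective _ (rg_inj s), card_filter_two_le, Nat.card_Icc]
  · intro s hs s' hs' hne
    simp only [Finset.mem_coe, Finset.mem_Icc] at hs hs'
    rw [Function.onFun, Finset.disjoint_left]
    intro G hG hG'
    simp only [Finset.mem_image, Finset.mem_filter, Finset.mem_powerset] at hG hG'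
    obtain ⟨D, ⟨hDsub, hDc⟩, rfl⟩ := hG
    obtain ⟨E, ⟨hEsub, hEc⟩, hE⟩ := hG'
    obtain ⟨x, hx⟩ := Finset.card_pos.mp (by omega : 0 < D.card)
    have hxb := hDsub hx
    simp only [Finset.mem_Icc] at hxb
    have hxm : (x, s - x) ∈ rg s D := Finset.mem_image_of_mem _ hx
    rw [← hE] at hxm
    simp only [rg, Finset.mem_image, Prod.mk.injEq] at hxm
    obtain ⟨y, hy, hy1, hy2⟩ := hxm
    have hyb := hEsub hy
    simp only [Finset.mem_Icc] at hyb
    omega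

lemma famP_props {n : ℕ} {G : Finset (ℕ × ℕ)} (h : G ∈ famP n) :
    G.Nonempty ∧ (∀ p ∈ G, p.1 ≤ p.2) ∧ (∀ p ∈ G, ∀ q ∈ G, p.1 < q.1 → p.2 < q.2) := by
  simp only [famP, Finset.mem_biUnion, Finset.mem_image, Finset.mem_erase,
    Finset.mem_powerset, Finset.mem_range] at h
  obtain ⟨k, _, D, ⟨hDne, _⟩, rfl⟩ := h
  refine ⟨?_, ?_, ?_⟩
  · simp only [pg, Finset.image_nonempty]
    exact Finset.nonempty_iff_ne_empty.mpr hDne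
  · intro p hp
    simp only [pg, Finset.mem_image] at hp
    obtain ⟨x, _, rfl⟩ := hp
    omega
  · intro p hp q hq
    simp only [pg, Finset.mem_image] at hp hq
    obtain ⟨x, _, rfl⟩ := hp
    obtain ⟨y, _, rfl⟩ := hq
    simp only
    omega

lemma famQ_props {n : ℕ} {G : Finset (ℕ × ℕ)} (h : G ∈ famQ n) :
    G.Nonempty ∧ (∀ p ∈ G, p.2 < p.1) ∧ (∀ p ∈ G, ∀ q ∈ G, p.1 < q.1 → p.2 < q.2) := by
  simp only [famQ, Finset.mem_biUnion, Finset.mem_image, Finset.mem_erase,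
    Finset.mem_powerset, Finset.mem_Icc] at h
  obtain ⟨k, hk, D, ⟨hDne, hDsub⟩, rfl⟩ := h
  refine ⟨?_, ?_, ?_⟩
  · simp only [qg, Finset.image_nonempty]
    exact Finset.nonempty_iff_ne_empty.mpr hDne
  · intro p hp
    simp only [qg, Finset.mem_image] at hp
    obtain ⟨x, hx, rfl⟩ := hp
    have := hDsub hx
    simp only [Finset.mem_Icc] at this
    omega
  · intro p hp q hq
    simp only [qg, Finset.mem_image] at hp hq
    obtain ⟨x, _, rfl⟩ := hp
    obtain ⟨y, _, rfl⟩ := hq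
    simp only
    omega

lemma famR_props {n : ℕ} {G : Finset (ℕ × ℕ)} (h : G ∈ famR n) :
    ∃ p ∈ G, ∃ q ∈ G, p.1 < q.1 ∧ q.2 < p.2 := by
  simp only [famR, Finset.mem_biUnion, Finset.mem_image, Finset.mem_filter,
    Finset.mem_powerset, Finset.mem_Icc] at h
  obtain ⟨s, hs, D, ⟨hDsub, hDc⟩, rfl⟩ := h
  obtain ⟨x, hx, y, hy, hxy⟩ := Finset.one_lt_card.mp hDc
  have hxb := hDsub hx
  have hyb := hDsub hy
  simp only [Finset.mem_Icc] at hxb hyb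
  rcases Nat.lt_or_ge x y with hlt | hge
  · exact ⟨(x, s - x), Finset.mem_image_of_mem _ hx, (y, s - y),
      Finset.mem_image_of_mem _ hy, by omega, by omega⟩
  · exact ⟨(y, s - y), Finset.mem_image_of_mem _ hy, (x, s - x),
      Finset.mem_image_of_mem _ hx, by omega, by omega⟩

lemma card_F (n : ℕ) :
    (F n).card = 1 + ((famP n).card + (famQ n).card + (famR n).card) := by
  have hPQ : Disjoint (famP n) (famQ n) := by
    rw [Finset.disjoint_left]
    intro G hG hG'
    obtain ⟨⟨p, hp⟩, h1, _⟩ := famP_props hG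
    obtain ⟨_, h2, _⟩ := famQ_props hG'
    exact absurd (h1 p hp) (by have := h2 p hp; omega)
  have hPQR : Disjoint (famP n ∪ famQ n) (famR n) := by
    rw [Finset.disjoint_left]
    intro G hG hG'
    obtain ⟨p, hp, q, hq, h1, h2⟩ := famR_props hG'
    rcases Finset.mem_union.mp hG with h | h
    · obtain ⟨_, _, hmono⟩ := famP_props h
      have := hmono p hp q hq h1
      omega
    · obtain ⟨_, _, hmono⟩ := famQ_props h
      have := hmono p hp q hq h1
      omega
  have hempty : ∅ ∉ famP n ∪ famQ n ∪ famR n := by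
    intro h
    rcases Finset.mem_union.mp h with h | h
    · rcases Finset.mem_union.mp h with h | h
      · obtain ⟨⟨p, hp⟩, -, -⟩ := famP_props h
        exact absurd hp (Finset.notMem_empty p)
      · obtain ⟨⟨p, hp⟩, -, -⟩ := famQ_props h
        exact absurd hp (Finset.notMem_empty p)
    · obtain ⟨p, hp, -⟩ := famR_props h
      exact absurd hp (Finset.notMem_empty p)
  rw [F, Finset.card_insert_of_notMem hempty, Finset.card_union_of_disjoint hPQR,
    Finset.card_union_of_disjoint hPQ]
  omega

lemma sumA (N : ℕ) : (∑ j ∈ Icc 1 N, (2 ^ j - 1)) + N + 2 = 2 ^ (N + 1) := by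
  induction N with
  | zero => simp
  | succ N ih =>
    rw [Finset.sum_Icc_succ_top (by omega : 1 ≤ N + 1)]
    have h2 : (2:ℕ) ^ (N + 1 + 1) = 2 * 2 ^ (N + 1) := by ring
    omega

lemma sumG (N : ℕ) :
    2 * (∑ j ∈ Icc 1 N, (2 ^ j - j - 1)) + N * N + 3 * N + 4 = 2 ^ (N + 2) := by
  induction N with
  | zero => simp
  | succ N ih =>
    rw [Finset.sum_Icc_succ_top (by omega : 1 ≤ N + 1)]
    have h2 : (2:ℕ) ^ (N + 1 + 2) = 2 * 2 ^ (N + 2) := by ring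
    have h3 : (2:ℕ) ^ (N + 2) = 2 * 2 ^ (N + 1) := by ring
    have h4 : N + 2 ≤ 2 ^ (N + 1) := by
      have := Nat.lt_two_pow_self (n := N + 1)
      omega
    have h5 : (N + 1) * (N + 1) = N * N + 2 * N + 1 := by ring
    omega

lemma sumP (n : ℕ) :
    (∑ k ∈ range n, (2 ^ (n - k) - 1)) = ∑ j ∈ Icc 1 n, (2 ^ j - 1) := by
  refine Finset.sum_nbij' (fun k => n - k) (fun j => n - j) ?_ ?_ ?_ ?_ ?_ <;>
    intro a ha <;>
    simp only [Finset.mem_range, Finset.mem_Icc] at * <;>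
    omega

lemma sumQ (n : ℕ) :
    (∑ k ∈ Icc 1 (n - 1), (2 ^ (n - k) - 1)) = ∑ j ∈ Icc 1 (n - 1), (2 ^ j - 1) := by
  refine Finset.sum_nbij' (fun k => n - k) (fun j => n - j) ?_ ?_ ?_ ?_ ?_ <;>
    intro a ha <;>
    simp only [Finset.mem_Icc] at * <;>
    omega

lemma sumR (n : ℕ) :
    (∑ s ∈ Icc 2 (2 * n), (2 ^ (min n (s - 1) + 1 - max 1 (s - n))
        - (min n (s - 1) + 1 - max 1 (s - n)) - 1)) =
      (∑ j ∈ Icc 1 n, (2 ^ j - j - 1)) + ∑ j ∈ Icc 1 (n - 1), (2 ^ j - j - 1) := by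
  rcases Nat.eq_zero_or_pos n with rfl | hn
  · simp
  have hsplit : Icc 2 (2 * n) = Icc 2 (n + 1) ∪ Ioc (n + 1) (2 * n) := by
    ext s
    simp only [Finset.mem_union, Finset.mem_Icc, Finset.mem_Ioc]
    omega
  have hdisj : Disjoint (Icc 2 (n + 1)) (Ioc (n + 1) (2 * n)) := by
    rw [Finset.disjoint_left]
    intro s hs hs'
    simp only [Finset.mem_Icc] at hs
    simp only [Finset.mem_Ioc] at hs'
    omega
  rw [hsplit, Finset.sum_union hdisj]
  congr 1
  · refine Finset.sum_nbij' (fun s => s - 1) (fun j => j + 1) ?_ ?_ ?_ ?_ ?_ <;>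
      intro a ha <;>
      simp only [Finset.mem_Icc] at * <;>
      try omega
    have h1 : min n (a - 1) + 1 - max 1 (a - n) = a - 1 := by omega
    rw [h1]
  · refine Finset.sum_nbij' (fun s => 2 * n + 1 - s) (fun j => 2 * n + 1 - j) ?_ ?_ ?_ ?_ ?_ <;>
      intro a ha <;>
      simp only [Finset.mem_Icc, Finset.mem_Ioc] at * <;>
      try omega
    have h1 : min n (a - 1) + 1 - max 1 (a - n) = 2 * n + 1 - a := by omega
    rw [h1]


lemma empty_isPIG (n : ℕ) : IsPartialIsometryGraph n (∅ : Finset (ℕ × ℕ)) := by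
  refine ⟨by simp, ?_, ?_, ?_⟩ <;> intro p hp <;> simp at hp

lemma set_eq (n : ℕ) :
    {G : Finset (ℕ × ℕ) | IsPartialIsometryGraph n G} = ↑(F n) := by
  ext G
  simp only [Set.mem_setOf_eq, Finset.mem_coe]
  constructor
  · intro h
    rcases G.eq_empty_or_nonempty with rfl | hne
    · exact Finset.mem_insert_self _ _
    · refine Finset.mem_insert_of_mem ?_
      rcases classify h hne with hc | hc | hc
      · exact Finset.mem_union_left _ (Finset.mem_union_left _ (mem_famP.mpr hc))
      · exact Finset.mem_union_left _ (Finset.mem_union_right _ (mem_famQ.mpr hc))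
      · exact Finset.mem_union_right _ (mem_famR.mpr hc)
  · intro h
    rcases Finset.mem_insert.mp h with rfl | h
    · exact empty_isPIG n
    · rcases Finset.mem_union.mp h with h | h
      · rcases Finset.mem_union.mp h with h | h
        · obtain ⟨k, hk, D, ⟨hsub, -⟩, rfl⟩ := mem_famP.mp h
          exact pg_isPIG hsub hk
        · obtain ⟨k, hk, D, ⟨hsub, -⟩, rfl⟩ := mem_famQ.mp h
          exact qg_isPIG hsub (by omega)
      · obtain ⟨s, hs, D, ⟨hsub, -⟩, rfl⟩ := mem_famR.mp h
        exact rg_isPIG hsub hs.1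

end PIGaux

theorem card_partial_isometries (n : ℕ) :
    {G : Finset (ℕ × ℕ) | IsPartialIsometryGraph n G}.ncard =
    3 * 2 ^ (n + 1) - (n + 2) ^ 2 - 1 := by
  rw [PIGaux.set_eq n, Set.ncard_coe_finset, PIGaux.card_F, PIGaux.card_famP,
    PIGaux.card_famQ, PIGaux.card_famR, PIGaux.sumP, PIGaux.sumQ, PIGaux.sumR]
  rcases n with _ | m
  · simp
  · have hA1 := PIGaux.sumA (m + 1)
    have hA2 := PIGaux.sumA m
    have hG1 := PIGaux.sumG (m + 1)
    have hG2 := PIGaux.sumG m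
    have hmm : m + 1 - 1 = m := by omega
    rw [hmm]
    have e1 : (2:ℕ) ^ (m + 1 + 2) = 2 * 2 ^ (m + 1 + 1) := by ring
    have e2 : (2:ℕ) ^ (m + 1 + 1) = 2 * 2 ^ (m + 1) := by ring
    have e3 : (2:ℕ) ^ (m + 2) = 2 * 2 ^ (m + 1) := by ring
    have q1 : (m + 1 + 2) ^ 2 = m * m + 6 * m + 9 := by ring
    have q2 : (m + 1) * (m + 1) = m * m + 2 * m + 1 := by ring
    omega
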